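/- Let α > 1, x ∈ [0,1], and i ≥ 1 an integer. Then ∫_0^x t^{1/α} (1−t)^{i−1} dt ≤ (e / i^{1+1/α}) ∫_0^{x·i} s^{1/α} e^{-s} ds; in other words, B(x; 1+1/α, i) ≤ (e / i^{1+1/α}) γ(1+1/α, x·i), where B(x; a, b) := ∫_0^x t^{a−1}(1−t)^{b−1} dt is the incomplete Beta function and γ(a, y) := ∫_0^y s^{a−1} e^{-s} ds is the lower incomplete Gamma function. -/

import Mathlib

/-- incomplete Beta vs lower incomplete Gamma.
`B(x; 1+1/α, i) ≤ (e / i^{1+1/α}) γ(1+1/α, x·i)`. -/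
theorem incBeta_le_incGamma
    (α : ℝ) (hα : 1 < α) (x : ℝ) (hx0 : 0 ≤ x) (hx1 : x ≤ 1) (i : ℕ) (hi : 1 ≤ i) :
    (∫ t in (0 : ℝ)..x, t ^ (1 / α) * (1 - t) ^ (i - 1))
      ≤ (Real.exp 1 / (i : ℝ) ^ (1 + 1 / α)) *
          ∫ s in (0 : ℝ)..(x * i), s ^ (1 / α) * Real.exp (-s) := by
  have hi0 : (0:ℝ) < i := by exact_mod_cast hi
  have hα0 : (0:ℝ) ≤ 1 / α := by positivity
  have hcr : Continuous fun t : ℝ => t ^ (1 / α) := Real.continuous_rpow_const hα0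
  -- substitution
  have hsub : ∫ s in (0 : ℝ)..(x * i), s ^ (1 / α) * Real.exp (-s)
      = (i : ℝ) • ∫ t in (0:ℝ)..x, (t * i) ^ (1 / α) * Real.exp (-(t * i)) := by
    have := intervalIntegral.integral_comp_mul_right
      (a := (0:ℝ)) (b := x) (f := fun s => s ^ (1 / α) * Real.exp (-s))
      (c := (i:ℝ)) (ne_of_gt hi0)
    rw [zero_mul] at this
    rw [this, smul_smul, mul_inv_cancel₀ (ne_of_gt hi0), one_smul]
  have hcongr : ∫ t in (0:ℝ)..x, (t * i) ^ (1 / α) * Real.exp (-(t * i))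
      = (i:ℝ) ^ (1 / α) * ∫ t in (0:ℝ)..x, t ^ (1 / α) * Real.exp (-(t * i)) := by
    rw [← intervalIntegral.integral_const_mul]
    apply intervalIntegral.integral_congr
    intro t ht
    rw [Set.uIcc_of_le hx0] at ht
    simp only
    rw [Real.mul_rpow ht.1 hi0.le]
    ring
  rw [hsub, hcongr, smul_eq_mul]
  have hpow : (i : ℝ) ^ (1 + 1 / α) = i * (i:ℝ) ^ (1 / α) := by
    rw [Real.rpow_add hi0, Real.rpow_one]
  rw [hpow]
  have hrw : Real.exp 1 / ((i:ℝ) * (i:ℝ) ^ (1 / α)) *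
      ((i:ℝ) * ((i:ℝ) ^ (1 / α) * ∫ t in (0:ℝ)..x, t ^ (1 / α) * Real.exp (-(t * i))))
      = ∫ t in (0:ℝ)..x, Real.exp 1 * (t ^ (1 / α) * Real.exp (-(t * i))) := by
    rw [intervalIntegral.integral_const_mul]
    field_simp
  rw [hrw]
  apply intervalIntegral.integral_mono_on hx0
  · exact (hcr.mul ((continuous_const.sub continuous_id).pow _)).intervalIntegrable _ _
  · exact (continuous_const.mul (hcr.mul
      (Real.continuous_exp.comp (continuous_id.mul continuous_const).neg))).intervalIntegrable _ _
  · intro t ht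
    have ht0 : 0 ≤ t := ht.1
    have ht1 : t ≤ 1 := le_trans ht.2 hx1
    have h1 : (1 - t) ^ (i - 1) ≤ Real.exp 1 * Real.exp (-(t * i)) := by
      rw [← Real.exp_add]
      calc (1 - t) ^ (i - 1) ≤ Real.exp (-t) ^ (i - 1) := by
            apply pow_le_pow_left₀ (by linarith)
            have := Real.add_one_le_exp (-t)
            linarith
        _ = Real.exp (-t * (i - 1 : ℕ)) := by
            rw [← Real.exp_nat_mul]; ring_nf
        _ ≤ Real.exp (1 + -(t * i)) := by
            apply Real.exp_le_exp.mpr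
            have : ((i - 1 : ℕ) : ℝ) = (i : ℝ) - 1 := by
              have : (1:ℕ) ≤ i := hi
              push_cast [Nat.cast_sub hi]; ring
            rw [this]; nlinarith
    calc t ^ (1 / α) * (1 - t) ^ (i - 1)
        ≤ t ^ (1 / α) * (Real.exp 1 * Real.exp (-(t * i))) := by
          apply mul_le_mul_of_nonneg_left h1 (Real.rpow_nonneg ht0 _)
      _ = Real.exp 1 * (t ^ (1 / α) * Real.exp (-(t * i))) := by ring
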